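/- Let R be a ring and M a right R-module that is the direct limit of a countable directed system F₀ → F₁ → F₂ → ⋯ of finitely generated free modules. Then there is a pure short exact sequence 0 → R^(ω) → R^(ω) → M → 0; in particular, M is a pure-epimorphic image of a free module. -/

import Mathlib

universe u

/-- A monomorphism `ν : N → M` is pure if for every finitely presented module `C`,
the induced map `Hom(C, M) → Hom(C, M / ν(N))` is surjective. -/
def IsPureMono (R : Type u) [Ring R] {N M : Type u}
    [AddCommGroup N] [Module R N] [AddCommGroup M] [Module R M]
    (ν : N →ₗ[R] M) : Prop :=
  ∀ (C : Type u) [AddCommGroup C] [Module R C], Module.FinitePresentation R C →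
    ∀ h : C →ₗ[R] M ⧸ LinearMap.range ν,
      ∃ g : C →ₗ[R] M, (LinearMap.range ν).mkQ ∘ₗ g = h

/-- Iterated composite of the transition maps of a directed system over `ℕ`. -/
def iterMap (R : Type u) [Ring R] (F : ℕ → Type u)
    [∀ n, AddCommGroup (F n)] [∀ n, Module R (F n)]
    (t : ∀ n, F n →ₗ[R] F (n + 1)) : ∀ (n k : ℕ), F n →ₗ[R] F (n + k)
  | _, 0 => LinearMap.id
  | n, (k + 1) => (t (n + k)) ∘ₗ iterMap R F t n k

section Aux

variable (R : Type u) [Ring R] (F : ℕ → Type u)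
  [∀ n, AddCommGroup (F n)] [∀ n, Module R (F n)]
  (t : ∀ n, F n →ₗ[R] F (n + 1))

lemma iterMap_succ_apply (n k : ℕ) (x : F n) :
    iterMap R F t n (k + 1) x = t (n + k) (iterMap R F t n k x) := rfl

lemma iterMap_eq_zero_mono {n k : ℕ} {x : F n} (h : iterMap R F t n k x = 0)
    {k' : ℕ} (hk : k ≤ k') : iterMap R F t n k' x = 0 := by
  obtain ⟨j, rfl⟩ := Nat.exists_eq_add_of_le hk
  clear hk
  induction j with
  | zero => exact h
  | succ j ih =>
    have h1 : iterMap R F t n (k + (j + 1)) x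
        = t (n + (k + j)) (iterMap R F t n (k + j) x) := rfl
    rw [h1, ih, map_zero]

lemma v_iterMap {M : Type u} [AddCommGroup M] [Module R M]
    (v : ∀ n, F n →ₗ[R] M) (hcompat : ∀ n, v (n + 1) ∘ₗ t n = v n)
    (n k : ℕ) (x : F n) : v (n + k) (iterMap R F t n k x) = v n x := by
  induction k with
  | zero => rfl
  | succ k ih =>
    have h1 : iterMap R F t n (k + 1) x = t (n + k) (iterMap R F t n k x) := rfl
    rw [h1]
    exact (LinearMap.congr_fun (hcompat (n + k)) _).trans ih

lemma exists_push {M : Type u} [AddCommGroup M] [Module R M]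
    (v : ∀ n, F n →ₗ[R] M) (hcompat : ∀ n, v (n + 1) ∘ₗ t n = v n)
    {n m : ℕ} (h : n ≤ m) (x : F n) : ∃ w : F m, v m w = v n x := by
  obtain ⟨k, rfl⟩ := Nat.exists_eq_add_of_le h
  exact ⟨iterMap R F t n k x, v_iterMap R F t v hcompat n k x⟩

/-- transition maps of the stabilized system `G n = F n × R`. -/
noncomputable def tG (n : ℕ) : (F n × R) →ₗ[R] (F (n + 1) × R) :=
  ((t n).comp (LinearMap.fst R (F n) R)).prod 0

/-- shift operator on the direct sum. -/
noncomputable def shiftMap : (Π₀ n, F n × R) →ₗ[R] (Π₀ n, F n × R) :=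
  DFinsupp.lsum ℕ fun n => (DFinsupp.lsingle (n + 1)).comp (tG R F t n)

/-- the telescope map `1 - shift`. -/
noncomputable def f0 : (Π₀ n, F n × R) →ₗ[R] (Π₀ n, F n × R) :=
  LinearMap.id - shiftMap R F t

lemma shiftMap_single (n : ℕ) (z : F n × R) :
    shiftMap R F t (DFinsupp.single n z) = DFinsupp.single (n + 1) (tG R F t n z) :=
  DFinsupp.lsum_single _ _ _ _

lemma f0_single (n : ℕ) (z : F n × R) :
    f0 R F t (DFinsupp.single n z)
      = DFinsupp.single n z - DFinsupp.single (n + 1) (tG R F t n z) := by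
  simp [f0, shiftMap_single, LinearMap.sub_apply]

lemma shiftMap_apply_zero (x : Π₀ n, F n × R) : shiftMap R F t x 0 = 0 := by
  have h : (DFinsupp.lapply (R := R) (M := fun n => F n × R) 0).comp (shiftMap R F t) = 0 := by
    apply DFinsupp.lhom_ext'
    intro n
    apply LinearMap.ext
    intro z
    simp only [LinearMap.comp_apply, LinearMap.zero_apply, DFinsupp.lsingle_apply,
      DFinsupp.lapply_apply]
    rw [shiftMap_single]
    exact DFinsupp.single_eq_of_ne (Nat.succ_ne_zero n).symm
  exact LinearMap.congr_fun h x

lemma shiftMap_apply_succ (x : Π₀ n, F n × R) (m : ℕ) :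
    shiftMap R F t x (m + 1) = tG R F t m (x m) := by
  have h : (DFinsupp.lapply (R := R) (M := fun n => F n × R) (m + 1)).comp (shiftMap R F t)
      = (tG R F t m).comp (DFinsupp.lapply m) := by
    apply DFinsupp.lhom_ext'
    intro n
    apply LinearMap.ext
    intro z
    simp only [LinearMap.comp_apply, DFinsupp.lsingle_apply, DFinsupp.lapply_apply]
    rw [shiftMap_single]
    by_cases hnm : n = m
    · subst hnm
      simp [DFinsupp.single_eq_same]
    · rw [DFinsupp.single_eq_of_ne (by omega), DFinsupp.single_eq_of_ne (Ne.symm hnm), map_zero]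
  exact LinearMap.congr_fun h x

lemma f0_injective : Function.Injective (f0 R F t) := by
  have key : ∀ x, f0 R F t x = 0 → x = 0 := by
    intro x hx
    have hx' : x = shiftMap R F t x := by
      have h5 : x - shiftMap R F t x = 0 := by
        simpa [f0, LinearMap.sub_apply] using hx
      rwa [sub_eq_zero] at h5
    have hcomp : ∀ m, x m = 0 := by
      intro m
      induction m with
      | zero =>
        conv_lhs => rw [hx']
        exact shiftMap_apply_zero R F t x
      | succ m ih =>
        conv_lhs => rw [hx']
        rw [shiftMap_apply_succ, ih, map_zero]
    exact DFinsupp.ext fun m => by rw [hcomp m]; rfl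
  intro a b hab
  have : f0 R F t (a - b) = 0 := by rw [map_sub, hab, sub_self]
  have := key _ this
  rwa [sub_eq_zero] at this

/-- the limit map on the direct sum. -/
noncomputable def g0 {M : Type u} [AddCommGroup M] [Module R M]
    (v : ∀ n, F n →ₗ[R] M) : (Π₀ n, F n × R) →ₗ[R] M :=
  DFinsupp.lsum ℕ fun n => (v n).comp (LinearMap.fst R (F n) R)

variable {M : Type u} [AddCommGroup M] [Module R M] (v : ∀ n, F n →ₗ[R] M)

lemma g0_single (n : ℕ) (z : F n × R) :
    g0 R F v (DFinsupp.single n z) = v n z.1 :=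
  DFinsupp.lsum_single _ _ _ _

lemma g0_comp_f0 (hcompat : ∀ n, v (n + 1) ∘ₗ t n = v n) :
    (g0 R F v).comp (f0 R F t) = 0 := by
  apply DFinsupp.lhom_ext'
  intro n
  apply LinearMap.ext
  intro z
  simp only [LinearMap.comp_apply, DFinsupp.lsingle_apply, LinearMap.zero_apply]
  rw [f0_single, map_sub, g0_single, g0_single]
  have h4 : (tG R F t n z).1 = t n z.1 := rfl
  rw [h4, ← LinearMap.comp_apply (v (n + 1)) (t n), hcompat n, sub_self]

lemma g0_eq_zero_of_mem_range (hcompat : ∀ n, v (n + 1) ∘ₗ t n = v n)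
    {x : Π₀ n, F n × R} (hx : x ∈ LinearMap.range (f0 R F t)) : g0 R F v x = 0 := by
  obtain ⟨w, rfl⟩ := hx
  exact LinearMap.congr_fun (g0_comp_f0 R F t v hcompat) w

lemma tele_B (n k : ℕ) (z : F n × R) :
    DFinsupp.single n z - DFinsupp.single (n + k) (iterMap R (fun n => F n × R) (tG R F t) n k z)
      ∈ LinearMap.range (f0 R F t) := by
  induction k with
  | zero =>
    show DFinsupp.single (β := fun n => F n × R) n z - DFinsupp.single (β := fun n => F n × R) n z ∈ _
    rw [sub_self]
    exact zero_mem _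
  | succ k ih =>
    set w := iterMap R (fun n => F n × R) (tG R F t) n k z with hw
    show DFinsupp.single (β := fun n => F n × R) n z
        - DFinsupp.single (β := fun n => F n × R) ((n + k) + 1) (tG R F t (n + k) w) ∈ _
    have h2 : DFinsupp.single (β := fun n => F n × R) n z
        - DFinsupp.single (β := fun n => F n × R) ((n + k) + 1) (tG R F t (n + k) w)
        = (DFinsupp.single (β := fun n => F n × R) n z
            - DFinsupp.single (β := fun n => F n × R) (n + k) w)
          + f0 R F t (DFinsupp.single (β := fun n => F n × R) (n + k) w) := by
      rw [f0_single]
      abel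
    rw [h2]
    exact add_mem ih (LinearMap.mem_range_self _ _)

lemma tele_up {n m : ℕ} (h : n ≤ m) (z : F n × R) :
    ∃ w : F m × R, DFinsupp.single n z - DFinsupp.single m w ∈ LinearMap.range (f0 R F t) := by
  obtain ⟨k, rfl⟩ := Nat.exists_eq_add_of_le h
  exact ⟨_, tele_B R F t n k z⟩

lemma tele_C (x : Π₀ n, F n × R) :
    ∃ N y, x - DFinsupp.single N y ∈ LinearMap.range (f0 R F t) := by
  induction x using DFinsupp.induction with
  | h0 => exact ⟨0, 0, by simp⟩
  | ha i b rest hrest hb ih =>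
    obtain ⟨N, y, hy⟩ := ih
    obtain ⟨w1, hw1⟩ := tele_up R F t (le_max_left i N) b
    obtain ⟨w2, hw2⟩ := tele_up R F t (le_max_right i N) y
    refine ⟨max i N, w1 + w2, ?_⟩
    have h2 : (DFinsupp.single i b + rest) - DFinsupp.single (max i N) (w1 + w2)
        = (DFinsupp.single i b - DFinsupp.single (max i N) w1)
          + ((rest - DFinsupp.single N y)
            + (DFinsupp.single N y - DFinsupp.single (max i N) w2)) := by
      rw [DFinsupp.single_add]
      abel
    rw [h2]
    exact add_mem hw1 (add_mem hy hw2)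

lemma iterG_fst (n k : ℕ) (z : F n × R) :
    (iterMap R (fun n => F n × R) (tG R F t) n k z).1 = iterMap R F t n k z.1 := by
  induction k with
  | zero => rfl
  | succ k ih =>
    have h1 : iterMap R (fun n => F n × R) (tG R F t) n (k + 1) z
        = tG R F t (n + k) (iterMap R (fun n => F n × R) (tG R F t) n k z) := rfl
    have h2 : iterMap R F t n (k + 1) z.1 = t (n + k) (iterMap R F t n k z.1) := rfl
    rw [h1, h2, ← ih]
    rfl

lemma iterG_snd (n k : ℕ) (z : F n × R) :
    (iterMap R (fun n => F n × R) (tG R F t) n (k + 1) z).2 = 0 := rfl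

lemma tele_exact (hcompat : ∀ n, v (n + 1) ∘ₗ t n = v n)
    (hker : ∀ n x, v n x = 0 → ∃ k, iterMap R F t n k x = 0) :
    LinearMap.range (f0 R F t) = LinearMap.ker (g0 R F v) := by
  apply le_antisymm
  · rintro x hx
    exact LinearMap.mem_ker.mpr (g0_eq_zero_of_mem_range R F t v hcompat hx)
  · intro x hx
    obtain ⟨N, y, hNy⟩ := tele_C R F t x
    have hy : v N y.1 = 0 := by
      have h1 : g0 R F v (x - DFinsupp.single N y) = 0 :=
        g0_eq_zero_of_mem_range R F t v hcompat hNy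
      have h2 : g0 R F v (DFinsupp.single N y) = 0 := by
        have h3 := map_sub (g0 R F v) x (DFinsupp.single N y)
        rw [h1, LinearMap.mem_ker.mp hx, zero_sub] at h3
        exact neg_eq_zero.mp h3.symm
      rwa [g0_single] at h2
    obtain ⟨k, hk⟩ := hker N y.1 hy
    have hk1 : iterMap R F t N (k + 1) y.1 = 0 := by
      have h1 : iterMap R F t N (k + 1) y.1 = t (N + k) (iterMap R F t N k y.1) := rfl
      rw [h1, hk, map_zero]
    have hzero : iterMap R (fun n => F n × R) (tG R F t) N (k + 1) y = 0 := by
      have h1 := iterG_fst R F t N (k + 1) y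
      have h2 := iterG_snd R F t N k y
      rw [hk1] at h1
      exact Prod.ext h1 h2
    have hmem : DFinsupp.single N y ∈ LinearMap.range (f0 R F t) := by
      have := tele_B R F t N (k + 1) y
      rw [hzero, DFinsupp.single_zero, sub_zero] at this
      exact this
    have := add_mem hNy hmem
    simpa using this

end Aux

set_option maxHeartbeats 1600000 in
/-- If `M` is the direct limit of a countable directed system `F₀ → F₁ → ⋯` of
finitely generated free modules, then there is a pure short exact sequence
`0 → R^(ω) → R^(ω) → M → 0`; in particular `M` is a pure-epimorphic image of a
free module. -/
theorem telescope_pure_exact (R : Type u) [Ring R] (F : ℕ → Type u)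
    [∀ n, AddCommGroup (F n)] [∀ n, Module R (F n)]
    (hfree : ∀ n, Module.Free R (F n)) (hfg : ∀ n, Module.Finite R (F n))
    (t : ∀ n, F n →ₗ[R] F (n + 1))
    (M : Type u) [AddCommGroup M] [Module R M]
    (v : ∀ n, F n →ₗ[R] M)
    (hcompat : ∀ n, v (n + 1) ∘ₗ t n = v n)
    (hsurj : ∀ m : M, ∃ n x, v n x = m)
    (hker : ∀ n x, v n x = 0 → ∃ k, iterMap R F t n k x = 0) :
    ∃ (f : (ℕ →₀ R) →ₗ[R] (ℕ →₀ R)) (g : (ℕ →₀ R) →ₗ[R] M),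
      Function.Injective f ∧ Function.Surjective g ∧
        LinearMap.range f = LinearMap.ker g ∧ IsPureMono R f := by
  classical
  haveI : ∀ n, Module.Free R (F n) := hfree
  haveI : ∀ n, Module.Finite R (F n) := hfg
  -- build the isomorphism `⨁ (F n × R) ≃ₗ (ℕ →₀ R)`
  let ι : ℕ → Type u := fun n => Module.Free.ChooseBasisIndex R (F n) ⊕ PUnit
  let bG : ∀ n, Module.Basis (ι n) R (F n × R) :=
    fun n => (Module.Free.chooseBasis R (F n)).prod (Module.Basis.singleton PUnit R)
  let bD : Module.Basis (Σ n, ι n) R (Π₀ n, F n × R) := DFinsupp.basis bG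
  haveI : Infinite (Σ n, ι n) :=
    Infinite.of_injective (fun n => (⟨n, Sum.inr PUnit.unit⟩ : Σ n, ι n))
      (fun a b hab => congrArg Sigma.fst hab)
  obtain ⟨eqv⟩ : Nonempty ((Σ n, ι n) ≃ ℕ) := nonempty_equiv_of_countable
  let e : (Π₀ n, F n × R) ≃ₗ[R] (ℕ →₀ R) := (bD.reindex eqv).repr
  refine ⟨e.toLinearMap ∘ₗ (f0 R F t) ∘ₗ e.symm.toLinearMap,
    (g0 R F v) ∘ₗ e.symm.toLinearMap, ?_, ?_, ?_, ?_⟩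
  · -- injectivity
    rw [LinearMap.coe_comp, LinearMap.coe_comp, LinearEquiv.coe_coe, LinearEquiv.coe_coe]
    exact e.injective.comp ((f0_injective R F t).comp e.symm.injective)
  · -- surjectivity
    intro m
    obtain ⟨n, x, hx⟩ := hsurj m
    refine ⟨e (DFinsupp.single n (x, 0)), ?_⟩
    simp only [LinearMap.comp_apply, LinearEquiv.coe_coe, e.symm_apply_apply]
    rw [g0_single]
    exact hx
  · -- exactness
    ext x
    simp only [LinearMap.mem_range, LinearMap.mem_ker, LinearMap.comp_apply,
      LinearEquiv.coe_coe]
    constructor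
    · rintro ⟨y, rfl⟩
      rw [e.symm_apply_apply]
      exact g0_eq_zero_of_mem_range R F t v hcompat (LinearMap.mem_range_self _ _)
    · intro hx
      have h1 : e.symm x ∈ LinearMap.ker (g0 R F v) := hx
      rw [← tele_exact R F t v hcompat hker] at h1
      obtain ⟨w, hw⟩ := h1
      exact ⟨e w, by rw [e.symm_apply_apply, hw, e.apply_symm_apply]⟩
  · -- purity
    intro C _ _ hC
    set f : (ℕ →₀ R) →ₗ[R] (ℕ →₀ R) := e.toLinearMap ∘ₗ (f0 R F t) ∘ₗ e.symm.toLinearMap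
      with hf
    set g : (ℕ →₀ R) →ₗ[R] M := (g0 R F v) ∘ₗ e.symm.toLinearMap with hg
    intro h
    have hrange : LinearMap.range f = LinearMap.ker g := by
      ext x
      simp only [hf, hg, LinearMap.mem_range, LinearMap.mem_ker, LinearMap.comp_apply,
        LinearEquiv.coe_coe]
      constructor
      · rintro ⟨y, rfl⟩
        rw [e.symm_apply_apply]
        exact g0_eq_zero_of_mem_range R F t v hcompat (LinearMap.mem_range_self _ _)
      · intro hx
        have h1 : e.symm x ∈ LinearMap.ker (g0 R F v) := hx
        rw [← tele_exact R F t v hcompat hker] at h1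
        obtain ⟨w, hw⟩ := h1
        exact ⟨e w, by rw [e.symm_apply_apply, hw, e.apply_symm_apply]⟩
    -- the induced iso from the cokernel to `M`
    let gbar : ((ℕ →₀ R) ⧸ LinearMap.range f) →ₗ[R] M :=
      Submodule.liftQ (LinearMap.range f) g (le_of_eq hrange)
    have hgbar_inj : Function.Injective gbar := by
      rw [← LinearMap.ker_eq_bot]
      exact Submodule.ker_liftQ_eq_bot _ _ _ (le_of_eq hrange.symm)
    set h' : C →ₗ[R] M := gbar ∘ₗ h with hh'
    -- presentation of C
    obtain ⟨s, hspan, hfgker⟩ := hC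
    set p : (s →₀ R) →ₗ[R] C := Finsupp.linearCombination R ((↑) : s → C) with hp
    have hpsurj : Function.Surjective p := by
      apply LinearMap.range_eq_top.mp
      simpa only [hp, Finsupp.range_linearCombination, Subtype.range_coe_subtype,
        Finset.setOf_mem] using hspan
    obtain ⟨T, hT⟩ := hfgker
    -- lift the generators
    choose nn xx hxx using fun i : s => hsurj (h' i)
    set N : ℕ := Finset.univ.sup nn with hN
    choose ww hww using fun i : s =>
      exists_push R F t v hcompat (Finset.le_sup (f := nn) (Finset.mem_univ i)) (xx i)
    set φ : (s →₀ R) →ₗ[R] F N := Finsupp.linearCombination R ww with hφ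
    have hkey : (v N) ∘ₗ φ = h' ∘ₗ p := by
      apply Finsupp.lhom_ext
      intro i a
      simp only [LinearMap.comp_apply, hφ, hp, Finsupp.linearCombination_single, map_smul]
      rw [hww i, hxx i]
    have hT0 : ∀ r : T, v N (φ r) = 0 := by
      intro r
      have h1 : (r : s →₀ R) ∈ LinearMap.ker p := by
        rw [← hT]
        exact Submodule.subset_span r.2
      have h2 := LinearMap.congr_fun hkey (r : s →₀ R)
      simp only [LinearMap.comp_apply] at h2
      rw [h2, LinearMap.mem_ker.mp h1, map_zero]
    choose kk hkk using fun r : T => hker N (φ r) (hT0 r)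
    set K : ℕ := Finset.univ.sup kk with hK
    have hKT : ∀ r : T, iterMap R F t N K (φ r) = 0 := fun r =>
      iterMap_eq_zero_mono R F t (hkk r) (Finset.le_sup (f := kk) (Finset.mem_univ r))
    set ψ₀ : (s →₀ R) →ₗ[R] F (N + K) := (iterMap R F t N K) ∘ₗ φ with hψ₀
    have hle : LinearMap.ker p ≤ LinearMap.ker ψ₀ := by
      rw [← hT, Submodule.span_le]
      intro r hr
      exact LinearMap.mem_ker.mpr (hKT ⟨r, hr⟩)
    let e' := p.quotKerEquivOfSurjective hpsurj
    set ψ : C →ₗ[R] F (N + K) :=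
      (Submodule.liftQ (LinearMap.ker p) ψ₀ hle) ∘ₗ e'.symm.toLinearMap with hψ
    have hψval : ∀ c, v (N + K) (ψ c) = h' c := by
      intro c
      obtain ⟨a, rfl⟩ := hpsurj c
      have hsymm : e'.symm (p a) = Submodule.Quotient.mk a := by
        apply e'.injective
        rw [e'.apply_symm_apply]
        rfl
      rw [hψ]
      simp only [LinearMap.comp_apply, LinearEquiv.coe_coe]
      rw [hsymm, Submodule.liftQ_apply, hψ₀]
      simp only [LinearMap.comp_apply]
      rw [v_iterMap R F t v hcompat N K (φ a)]
      exact (LinearMap.congr_fun hkey a).trans rfl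
    refine ⟨e.toLinearMap ∘ₗ (DFinsupp.lsingle (N + K)) ∘ₗ (LinearMap.inl R (F (N + K)) R) ∘ₗ ψ,
      ?_⟩
    have hmk : ∀ u, gbar ((LinearMap.range f).mkQ u) = g u := fun u =>
      LinearMap.congr_fun (Submodule.liftQ_mkQ (LinearMap.range f) g (le_of_eq hrange)) u
    apply LinearMap.ext
    intro c
    simp only [LinearMap.comp_apply]
    apply hgbar_inj
    rw [hmk, hg]
    simp only [LinearMap.comp_apply, LinearEquiv.coe_coe, e.symm_apply_apply,
      DFinsupp.lsingle_apply, LinearMap.inl_apply]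
    rw [g0_single]
    show v (N + K) (ψ c) = gbar (h c)
    exact hψval c
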